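/- Let x = (x_n)_{n≥2} and y = (y_n)_{n≥2} be sequences with x_n, y_n ∈ {1,…,n}, and suppose there is C ≥ 0 with |x_n − y_n| ≤ C for all n ≥ 2. Then the bijection φ : M_x → M_y determined by φ(P⁺_{x,n}) = P⁺_{y,n} and φ(P⁻_{x,n}) = P⁻_{y,n} for all n ≥ 2 is an e^C-bi-Lipschitz bijection with φ(P⁺_{x,2}) = P⁺_{y,2}. -/

import Mathlib

noncomputable section

/-- The tree distance on `ℝ²`. -/
def treeDist (p q : ℝ × ℝ) : ℝ :=
  if p.1 = q.1 then |p.2 - q.2| else |p.2| + |p.1 - q.1| + |q.2|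

/-- `∑_{i=2}^n e^{i²}`. -/
def expSum (n : ℕ) : ℝ := ∑ i ∈ Finset.Icc 2 n, Real.exp ((i : ℝ) ^ 2)

/-- `P⁺_{x,n} = (∑_{i=2}^n e^{i²}, e^{x_n})`. -/
def Pp (x : ℕ → ℕ) (n : ℕ) : ℝ × ℝ := (expSum n, Real.exp (x n))

/-- `P⁻_{x,n} = (∑_{i=2}^n e^{i²}, −e^{x_n})`. -/
def Pm (x : ℕ → ℕ) (n : ℕ) : ℝ × ℝ := (expSum n, -Real.exp (x n))

/-- `M_{x,n} = {P⁺_{x,n}, P⁻_{x,n}}`. -/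
def Mpart (x : ℕ → ℕ) (n : ℕ) : Set (ℝ × ℝ) := {Pp x n, Pm x n}

/-- `M_x = ⋃_{n≥2} M_{x,n}`. -/
def Mset (x : ℕ → ℕ) : Set (ℝ × ℝ) := ⋃ n ∈ {m : ℕ | 2 ≤ m}, Mpart x n

/-- `x = (x_n)_{n≥2}` is a sequence with `x_n ∈ {1,…,n}`. -/
def SeqOK (x : ℕ → ℕ) : Prop := ∀ n, 2 ≤ n → 1 ≤ x n ∧ x n ≤ n

/-- `A` is a `C`-net in `(M_x, d_x)`: `A ⊆ M_x` and every point of `M_x` is at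
distance (infimum) at most `C` from `A`. -/
def IsNet (x : ℕ → ℕ) (C : ℝ) (A : Set (ℝ × ℝ)) : Prop :=
  A ⊆ Mset x ∧ ∀ p ∈ Mset x, ∀ ε > 0, ∃ a ∈ A, treeDist p a ≤ C + ε

/-- `φ : A → B` is a `λ`-bi-Lipschitz bijection. -/
def IsBiLipOn (lam : ℝ) (A B : Set (ℝ × ℝ)) (φ : ℝ × ℝ → ℝ × ℝ) : Prop :=
  Set.BijOn φ A B ∧ ∀ p ∈ A, ∀ q ∈ A,
    lam⁻¹ * treeDist p q ≤ treeDist (φ p) (φ q) ∧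
    treeDist (φ p) (φ q) ≤ lam * treeDist p q

/-- Signed point `(expSum n, ε·e^{x_n})`. -/
def Qpt (x : ℕ → ℕ) (n : ℕ) (ε : ℝ) : ℝ × ℝ := (expSum n, ε * Real.exp (x n))

lemma expSum_lt {m n : ℕ} (hn : 2 ≤ n) (hmn : m < n) : expSum m < expSum n := by
  apply Finset.sum_lt_sum_of_subset (Finset.Icc_subset_Icc_right hmn.le)
    (i := n) (by simp [Finset.mem_Icc]; omega) (by simp [Finset.mem_Icc]; omega)
    (Real.exp_pos _) (fun j _ _ => (Real.exp_pos _).le)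

lemma expSum_ne {m n : ℕ} (hm : 2 ≤ m) (hn : 2 ≤ n) (h : m ≠ n) : expSum m ≠ expSum n := by
  rcases lt_or_gt_of_ne h with h' | h'
  · exact (expSum_lt hn h').ne
  · exact (expSum_lt hm h').ne'

lemma Pp_eq (x : ℕ → ℕ) (n : ℕ) : Pp x n = Qpt x n 1 := by simp [Pp, Qpt]

lemma Pm_eq (x : ℕ → ℕ) (n : ℕ) : Pm x n = Qpt x n (-1) := by simp [Pm, Qpt]

lemma mem_Mset_iff (x : ℕ → ℕ) (p : ℝ × ℝ) :
    p ∈ Mset x ↔ ∃ n, 2 ≤ n ∧ (p = Qpt x n 1 ∨ p = Qpt x n (-1)) := by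
  simp only [Mset, Mpart, Set.mem_iUnion, Set.mem_setOf_eq, Set.mem_insert_iff,
    Set.mem_singleton_iff, Pp_eq, Pm_eq, exists_prop]

/-- one-sided Lipschitz bound on signed points. -/
lemma key (x y : ℕ → ℕ) (C : ℝ) (hC : 0 ≤ C)
    (hdiff : ∀ n, 2 ≤ n → |(x n : ℝ) - (y n : ℝ)| ≤ C)
    {n m : ℕ} {ε δ : ℝ}
    (hn : 2 ≤ n) (hm : 2 ≤ m) (hε : |ε| = 1) (hδ : |δ| = 1) :
    treeDist (Qpt y n ε) (Qpt y m δ) ≤ Real.exp C * treeDist (Qpt x n ε) (Qpt x m δ) := by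
  have hexpC : (1:ℝ) ≤ Real.exp C := Real.one_le_exp hC
  have hxy : ∀ k, 2 ≤ k → Real.exp (y k) ≤ Real.exp C * Real.exp (x k) := by
    intro k hk
    rw [← Real.exp_add]
    apply Real.exp_le_exp.2
    have := (abs_le.1 (hdiff k hk)).1
    linarith
  by_cases hnm : n = m
  · subst hnm
    simp only [treeDist, Qpt, if_pos rfl]
    have habs : ∀ (z : ℕ → ℕ), |ε * Real.exp (z n) - δ * Real.exp (z n)|
        = |ε - δ| * Real.exp (z n) := by
      intro z; rw [← sub_mul, abs_mul, abs_of_pos (Real.exp_pos _)]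
    rw [habs x, habs y]
    calc |ε - δ| * Real.exp (y n) ≤ |ε - δ| * (Real.exp C * Real.exp (x n)) :=
          mul_le_mul_of_nonneg_left (hxy n hn) (abs_nonneg _)
      _ = Real.exp C * (|ε - δ| * Real.exp (x n)) := by ring
  · have h1 : expSum n ≠ expSum m := expSum_ne hn hm hnm
    simp only [treeDist, Qpt, if_neg h1]
    have habs : ∀ (z : ℕ → ℕ) (k : ℕ) (η : ℝ), |η| = 1 →
        |η * Real.exp ((z k : ℝ))| = Real.exp (z k) := by
      intro z k η hη
      rw [abs_mul, hη, one_mul, Real.abs_exp]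
    rw [habs y n ε hε, habs y m δ hδ, habs x n ε hε, habs x m δ hδ]
    have hΔ : |expSum n - expSum m| ≤ Real.exp C * |expSum n - expSum m| :=
      le_mul_of_one_le_left (abs_nonneg _) hexpC
    have h2 := hxy n hn
    have h3 := hxy m hm
    simp only [h1, ↓reduceIte]
    nlinarith

theorem biLip_of_bounded_diff (x y : ℕ → ℕ) (hx : SeqOK x) (hy : SeqOK y)
    (C : ℝ) (hC : 0 ≤ C) (hdiff : ∀ n, 2 ≤ n → |(x n : ℝ) - (y n : ℝ)| ≤ C)
    (φ : ℝ × ℝ → ℝ × ℝ)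
    (hφ : ∀ n, 2 ≤ n → φ (Pp x n) = Pp y n ∧ φ (Pm x n) = Pm y n) :
    IsBiLipOn (Real.exp C) (Mset x) (Mset y) φ ∧ φ (Pp x 2) = Pp y 2 := by
  have hdiff' : ∀ n, 2 ≤ n → |(y n : ℝ) - (x n : ℝ)| ≤ C := by
    intro n hn; rw [abs_sub_comm]; exact hdiff n hn
  have hφQ : ∀ n, 2 ≤ n → ∀ ε : ℝ, ε = 1 ∨ ε = -1 → φ (Qpt x n ε) = Qpt y n ε := by
    intro n hn ε hεv
    rcases hεv with rfl | rfl
    · rw [← Pp_eq, ← Pp_eq]; exact (hφ n hn).1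
    · rw [← Pm_eq, ← Pm_eq]; exact (hφ n hn).2
  have habs1 : ∀ ε : ℝ, ε = 1 ∨ ε = -1 → |ε| = 1 := by
    rintro ε (rfl | rfl) <;> simp
  refine ⟨⟨⟨?_, ?_, ?_⟩, ?_⟩, ?_⟩
  · -- MapsTo
    intro p hp
    rcases (mem_Mset_iff x p).1 hp with ⟨n, hn, hc⟩
    rcases hc with rfl | rfl
    · rw [hφQ n hn 1 (Or.inl rfl)]
      exact (mem_Mset_iff y _).2 ⟨n, hn, Or.inl rfl⟩
    · rw [hφQ n hn (-1) (Or.inr rfl)]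
      exact (mem_Mset_iff y _).2 ⟨n, hn, Or.inr rfl⟩
  · -- InjOn
    intro p hp q hq hpq
    rcases (mem_Mset_iff x p).1 hp with ⟨n, hn, hcp⟩
    rcases (mem_Mset_iff x q).1 hq with ⟨m, hm, hcq⟩
    obtain ⟨ε, hεv, rfl⟩ : ∃ ε : ℝ, (ε = 1 ∨ ε = -1) ∧ p = Qpt x n ε := by
      rcases hcp with rfl | rfl
      exacts [⟨1, Or.inl rfl, rfl⟩, ⟨-1, Or.inr rfl, rfl⟩]
    obtain ⟨δ, hδv, rfl⟩ : ∃ δ : ℝ, (δ = 1 ∨ δ = -1) ∧ q = Qpt x m δ := by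
      rcases hcq with rfl | rfl
      exacts [⟨1, Or.inl rfl, rfl⟩, ⟨-1, Or.inr rfl, rfl⟩]
    rw [hφQ n hn ε hεv, hφQ m hm δ hδv] at hpq
    have h1 : expSum n = expSum m := congrArg Prod.fst hpq
    have hnm : n = m := by
      by_contra hne; exact expSum_ne hn hm hne h1
    subst hnm
    have h2 : ε * Real.exp ((y n : ℝ)) = δ * Real.exp ((y n : ℝ)) := congrArg Prod.snd hpq
    have hεδ : ε = δ := mul_right_cancel₀ (Real.exp_ne_zero _) h2
    rw [hεδ]
  · -- SurjOn
    intro q hq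
    rcases (mem_Mset_iff y q).1 hq with ⟨n, hn, hc⟩
    rcases hc with rfl | rfl
    · exact ⟨Qpt x n 1, (mem_Mset_iff x _).2 ⟨n, hn, Or.inl rfl⟩, hφQ n hn 1 (Or.inl rfl)⟩
    · exact ⟨Qpt x n (-1), (mem_Mset_iff x _).2 ⟨n, hn, Or.inr rfl⟩, hφQ n hn (-1) (Or.inr rfl)⟩
  · -- bi-Lipschitz estimates
    intro p hp q hq
    rcases (mem_Mset_iff x p).1 hp with ⟨n, hn, hcp⟩
    rcases (mem_Mset_iff x q).1 hq with ⟨m, hm, hcq⟩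
    obtain ⟨ε, hεv, rfl⟩ : ∃ ε : ℝ, (ε = 1 ∨ ε = -1) ∧ p = Qpt x n ε := by
      rcases hcp with rfl | rfl
      exacts [⟨1, Or.inl rfl, rfl⟩, ⟨-1, Or.inr rfl, rfl⟩]
    obtain ⟨δ, hδv, rfl⟩ : ∃ δ : ℝ, (δ = 1 ∨ δ = -1) ∧ q = Qpt x m δ := by
      rcases hcq with rfl | rfl
      exacts [⟨1, Or.inl rfl, rfl⟩, ⟨-1, Or.inr rfl, rfl⟩]
    rw [hφQ n hn ε hεv, hφQ m hm δ hδv]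
    constructor
    · rw [inv_mul_le_iff₀ (Real.exp_pos C)]
      have := key y x C hC hdiff' hn hm (habs1 ε hεv) (habs1 δ hδv)
      linarith
    · exact key x y C hC hdiff hn hm (habs1 ε hεv) (habs1 δ hδv)
  · exact (hφ 2 le_rfl).1
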